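/- Let E and X be real inner product spaces, A : E → X a continuous linear map with operator norm ‖A‖, and b ∈ X. If ℓ : X → ℝ is smoothable with parameters (a, β), then the function F : E → ℝ, F(u) := ℓ(A u + b), is smoothable with parameters (a, β·‖A‖²): for every μ > 0 the function u ↦ ℓ_μ(A u + b), where ℓ_μ is a smooth approximation of ℓ, is a differentiable convex function satisfying the sandwich F_μ ≤ F ≤ F_μ + a·μ with gradient Lipschitz constant β‖A‖²/μ. -/
import Mathlib


/-- A convex function `F` on a convex set `U` of a real inner product space is
*smoothable* with parameters `(a, b)` if for every `μ > 0` there is a differentiable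
convex function `F_μ` on `U` with `F_μ ≤ F ≤ F_μ + a·μ` on `U` whose gradient is
`(b/μ)`-Lipschitz on `U`. -/
def Smoothable {E : Type*} [NormedAddCommGroup E] [InnerProductSpace ℝ E] [CompleteSpace E]
    (U : Set E) (F : E → ℝ) (a b : ℝ) : Prop :=
  ∀ μ : ℝ, 0 < μ → ∃ (Fμ : E → ℝ) (g : E → E),
    ConvexOn ℝ U Fμ ∧
    (∀ u ∈ U, HasGradientAt Fμ (g u) u) ∧
    (∀ u ∈ U, Fμ u ≤ F u ∧ F u ≤ Fμ u + a * μ) ∧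
    (∀ u₁ ∈ U, ∀ u₂ ∈ U, ‖g u₁ - g u₂‖ ≤ (b / μ) * ‖u₁ - u₂‖)

/-- **Composition of a smoothable function with an affine map is smoothable.**
If `ℓ : X → ℝ` is smoothable with parameters `(a, β)`, `A : E →L[ℝ] X` and `b ∈ X`,
then `F(u) := ℓ(A u + b)` is smoothable with parameters `(a, β·‖A‖²)`; moreover,
for every `μ > 0` and every smooth approximation `ℓ_μ` of `ℓ` (with gradient `gℓ`),
the function `F_μ := u ↦ ℓ_μ(A u + b)` is convex and differentiable with gradient
`u ↦ Aᵀ(gℓ(A u + b))`, satisfies `F_μ ≤ F ≤ F_μ + a·μ`, and its gradient is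
`(β‖A‖²/μ)`-Lipschitz. -/
theorem smoothable_comp_affine
    {E X : Type*} [NormedAddCommGroup E] [InnerProductSpace ℝ E] [CompleteSpace E]
    [NormedAddCommGroup X] [InnerProductSpace ℝ X] [CompleteSpace X]
    (A : E →L[ℝ] X) (b : X)
    (ℓ : X → ℝ) (hℓ : ConvexOn ℝ Set.univ ℓ)
    (a β : ℝ) (ha : 0 ≤ a) (hβ : 0 ≤ β)
    (hs : Smoothable Set.univ ℓ a β) :
    Smoothable Set.univ (fun u => ℓ (A u + b)) a (β * ‖A‖ ^ 2) ∧
    ∀ μ : ℝ, 0 < μ → ∀ (ℓμ : X → ℝ) (gℓ : X → X),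
      ConvexOn ℝ Set.univ ℓμ →
      (∀ x, HasGradientAt ℓμ (gℓ x) x) →
      (∀ x, ℓμ x ≤ ℓ x ∧ ℓ x ≤ ℓμ x + a * μ) →
      (∀ x₁ x₂, ‖gℓ x₁ - gℓ x₂‖ ≤ (β / μ) * ‖x₁ - x₂‖) →
      ConvexOn ℝ Set.univ (fun u => ℓμ (A u + b)) ∧
      (∀ u, HasGradientAt (fun u => ℓμ (A u + b))
        ((ContinuousLinearMap.adjoint A) (gℓ (A u + b))) u) ∧
      (∀ u, ℓμ (A u + b) ≤ ℓ (A u + b) ∧ ℓ (A u + b) ≤ ℓμ (A u + b) + a * μ) ∧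
      (∀ u₁ u₂, ‖(ContinuousLinearMap.adjoint A) (gℓ (A u₁ + b)) -
          (ContinuousLinearMap.adjoint A) (gℓ (A u₂ + b))‖ ≤
        (β * ‖A‖ ^ 2 / μ) * ‖u₁ - u₂‖) := by
  classical
  have key : ∀ μ : ℝ, 0 < μ → ∀ (ℓμ : X → ℝ) (gℓ : X → X),
      ConvexOn ℝ Set.univ ℓμ →
      (∀ x, HasGradientAt ℓμ (gℓ x) x) →
      (∀ x, ℓμ x ≤ ℓ x ∧ ℓ x ≤ ℓμ x + a * μ) →
      (∀ x₁ x₂, ‖gℓ x₁ - gℓ x₂‖ ≤ (β / μ) * ‖x₁ - x₂‖) →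
      ConvexOn ℝ Set.univ (fun u => ℓμ (A u + b)) ∧
      (∀ u, HasGradientAt (fun u => ℓμ (A u + b))
        ((ContinuousLinearMap.adjoint A) (gℓ (A u + b))) u) ∧
      (∀ u, ℓμ (A u + b) ≤ ℓ (A u + b) ∧ ℓ (A u + b) ≤ ℓμ (A u + b) + a * μ) ∧
      (∀ u₁ u₂, ‖(ContinuousLinearMap.adjoint A) (gℓ (A u₁ + b)) -
          (ContinuousLinearMap.adjoint A) (gℓ (A u₂ + b))‖ ≤
        (β * ‖A‖ ^ 2 / μ) * ‖u₁ - u₂‖) := by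
    intro μ hμ ℓμ gℓ hc hg hsw hlip
    refine ⟨?_, ?_, fun u => hsw _, ?_⟩
    · refine ⟨convex_univ, fun u _ v _ t s ht hs hts => ?_⟩
      have h1 : A (t • u + s • v) + b = t • (A u + b) + s • (A v + b) := by
        have : b = t • b + s • b := by rw [← add_smul, hts, one_smul]
        simp only [map_add, map_smul, smul_add]
        conv_lhs => rw [this]
        abel
      simp only [h1]
      exact hc.2 (Set.mem_univ _) (Set.mem_univ _) ht hs hts
    · intro u
      have haff : HasFDerivAt (fun u : E => A u + b) (A : E →L[ℝ] X) u :=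
        (A.hasFDerivAt).add_const b
      have h2 : HasFDerivAt (fun u : E => ℓμ (A u + b))
          ((InnerProductSpace.toDual ℝ X (gℓ (A u + b))).comp A) u :=
        ((hg (A u + b)).hasFDerivAt).comp u haff
      have h3 : (InnerProductSpace.toDual ℝ E
          ((ContinuousLinearMap.adjoint A) (gℓ (A u + b)))) =
          (InnerProductSpace.toDual ℝ X (gℓ (A u + b))).comp A := by
        ext v
        simp [InnerProductSpace.toDual_apply_apply, ContinuousLinearMap.adjoint_inner_left]
      rw [hasGradientAt_iff_hasFDerivAt, h3]
      exact h2
    · intro u₁ u₂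
      have hA : ‖(ContinuousLinearMap.adjoint A)‖ = ‖A‖ :=
        (ContinuousLinearMap.adjoint : (E →L[ℝ] X) ≃ₗᵢ⋆[ℝ] (X →L[ℝ] E)).norm_map A
      calc ‖(ContinuousLinearMap.adjoint A) (gℓ (A u₁ + b)) -
            (ContinuousLinearMap.adjoint A) (gℓ (A u₂ + b))‖
          = ‖(ContinuousLinearMap.adjoint A) (gℓ (A u₁ + b) - gℓ (A u₂ + b))‖ := by
            rw [map_sub]
        _ ≤ ‖A‖ * ‖gℓ (A u₁ + b) - gℓ (A u₂ + b)‖ := by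
            rw [← hA]; exact (ContinuousLinearMap.adjoint A).le_opNorm _
        _ ≤ ‖A‖ * ((β / μ) * ‖(A u₁ + b) - (A u₂ + b)‖) := by
            gcongr; exact hlip _ _
        _ = ‖A‖ * ((β / μ) * ‖A (u₁ - u₂)‖) := by rw [add_sub_add_right_eq_sub, map_sub]
        _ ≤ ‖A‖ * ((β / μ) * (‖A‖ * ‖u₁ - u₂‖)) := by
            have := A.le_opNorm (u₁ - u₂)
            gcongr
        _ = (β * ‖A‖ ^ 2 / μ) * ‖u₁ - u₂‖ := by ring
  refine ⟨?_, key⟩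
  intro μ hμ
  obtain ⟨ℓμ, gℓ, hc, hg, hsw, hlip⟩ := hs μ hμ
  obtain ⟨kc, kg, ksw, klip⟩ := key μ hμ ℓμ gℓ hc (fun x => hg x (Set.mem_univ _))
    (fun x => hsw x (Set.mem_univ _))
    (fun x₁ x₂ => hlip x₁ (Set.mem_univ _) x₂ (Set.mem_univ _))
  exact ⟨fun u => ℓμ (A u + b), fun u => (ContinuousLinearMap.adjoint A) (gℓ (A u + b)),
    kc, fun u _ => kg u, fun u _ => ksw u, fun u₁ _ u₂ _ => klip u₁ u₂⟩
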